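/- Let X be a nonempty compact metric space, let A be a unital C*-algebra, and let φ, ψ : C(X, ℂ) → A be unital *-homomorphisms. Then the following are equivalent: (i) for every ε > 0 there exists a unitary u ∈ A such that ‖φ(f) − u·ψ(f)·u*‖ ≤ ε for every 1-Lipschitz function f : X → ℝ (viewed as an element of C(X, ℂ)), with the same u for all such f simultaneously; (ii) φ and ψ are approximately unitarily equivalent, i.e. for every ε > 0 and every finite set F ⊆ C(X, ℂ) there exists a unitary u ∈ A such that ‖φ(g) − u·ψ(g)·u*‖ < ε for every g ∈ F. -/

import Mathlib

open scoped NNReal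
open Metric

set_option linter.unusedSectionVars false

/-- A real-valued `1`-Lipschitz function on a metric space, viewed as an element of
`C(X, ℂ)`. -/
def lipToC {X : Type*} [MetricSpace X] (f : X → ℝ) (hf : LipschitzWith 1 f) :
    C(X, ℂ) :=
  ⟨fun x => (f x : ℂ), Complex.continuous_ofReal.comp hf.continuous⟩

section Aux

variable {X : Type*} [MetricSpace X] [CompactSpace X]
variable {A : Type*} [NormedRing A] [StarRing A] [CStarRing A] [CompleteSpace A]
    [NormedAlgebra ℂ A] [StarModule ℂ A]

/-- A real continuous map viewed inside `C(X, ℂ)`. -/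
noncomputable def myToC (a : C(X, ℝ)) : C(X, ℂ) :=
  ⟨fun x => (a x : ℂ), Complex.continuous_ofReal.comp a.continuous⟩

lemma norm_myToC_le (a : C(X, ℝ)) : ‖myToC a‖ ≤ ‖a‖ := by
  refine ContinuousMap.norm_le _ (norm_nonneg a) |>.2 fun x => ?_
  simp only [myToC, ContinuousMap.coe_mk, Complex.norm_real]
  exact a.norm_coe_le_norm x

lemma myToC_sub (a b : C(X, ℝ)) : myToC (a - b) = myToC a - myToC b := by
  ext x; simp [myToC]

lemma myNormApplyLe (φ : C(X,ℂ) →⋆ₐ[ℂ] A) (g : C(X,ℂ)) : ‖φ g‖ ≤ ‖g‖ := by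
  letI : CStarAlgebra A :=
    { toNormedRing := ‹_›, toStarRing := ‹_›, toCompleteSpace := ‹_›,
      toCStarRing := ‹_›, toNormedAlgebra := ‹_›, toStarModule := ‹_› }
  exact NonUnitalStarAlgHom.norm_apply_le φ g

lemma myConjNorm {u : A} (hu : u ∈ unitary A) (x : A) : ‖u * x * star u‖ = ‖x‖ := by
  rw [CStarRing.norm_mul_mem_unitary _ (Unitary.star_mem hu),
    CStarRing.norm_mem_unitary_mul _ hu]

/-- The subalgebra of Lipschitz functions inside `C(X, ℝ)`. -/
noncomputable def lipSubalg (X : Type*) [MetricSpace X] [CompactSpace X] :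
    Subalgebra ℝ C(X, ℝ) where
  carrier := {a | ∃ K : ℝ≥0, LipschitzWith K ⇑a}
  add_mem' := by
    rintro a b ⟨Ka, ha⟩ ⟨Kb, hb⟩
    exact ⟨Ka + Kb, ha.add hb⟩
  mul_mem' := by
    rintro a b ⟨Ka, ha⟩ ⟨Kb, hb⟩
    refine ⟨‖a‖₊ * Kb + ‖b‖₊ * Ka, LipschitzWith.of_dist_le_mul fun x y => ?_⟩
    have h1 : dist (a x * b x) (a y * b y)
        ≤ ‖a‖ * dist (b x) (b y) + ‖b‖ * dist (a x) (a y) := by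
      simp only [Real.dist_eq]
      calc |a x * b x - a y * b y| = |a x * (b x - b y) + b y * (a x - a y)| := by ring_nf
        _ ≤ |a x * (b x - b y)| + |b y * (a x - a y)| := abs_add_le _ _
        _ = |a x| * |b x - b y| + |b y| * |a x - a y| := by rw [abs_mul, abs_mul]
        _ ≤ ‖a‖ * |b x - b y| + ‖b‖ * |a x - a y| := by
            gcongr <;> [exact a.norm_coe_le_norm x; exact b.norm_coe_le_norm y]
    have h2 := hb.dist_le_mul x y
    have h3 := ha.dist_le_mul x y
    have hab : dist ((a * b) x) ((a * b) y) = dist (a x * b x) (a y * b y) := rfl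
    rw [hab]
    push_cast
    nlinarith [dist_nonneg (x := x) (y := y), norm_nonneg a, norm_nonneg b,
      dist_nonneg (x := a x) (y := a y), dist_nonneg (x := b x) (y := b y), h1, h2, h3]
  algebraMap_mem' := fun r => ⟨0, by
    have : ⇑(algebraMap ℝ C(X, ℝ) r) = fun _ => r := rfl
    rw [this]; exact LipschitzWith.const' r⟩

lemma lipSubalg_separates (X : Type*) [MetricSpace X] [CompactSpace X] :
    (lipSubalg X).SeparatesPoints := by
  intro x y hxy
  refine ⟨_, ⟨⟨fun z => dist z y, (LipschitzWith.dist_left y).continuous⟩,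
    ⟨1, LipschitzWith.dist_left y⟩, rfl⟩, ?_⟩
  simp [dist_eq_zero, hxy]

lemma exists_lip_near (a : C(X, ℝ)) {δ : ℝ} (hδ : 0 < δ) :
    ∃ (g : C(X, ℝ)) (K : ℝ≥0), LipschitzWith K ⇑g ∧ ‖g - a‖ < δ := by
  obtain ⟨g, hg⟩ := ContinuousMap.exists_mem_subalgebra_near_continuousMap_of_separatesPoints
    (lipSubalg X) (lipSubalg_separates X) a δ hδ
  obtain ⟨K, hK⟩ := g.2
  exact ⟨g, K, hK, hg⟩

lemma totallyBounded_lip (x₀ : X) :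
    TotallyBounded {a : C(X, ℝ) | LipschitzWith 1 ⇑a ∧ a x₀ = 0} := by
  set S : Set C(X, ℝ) := {a | LipschitzWith 1 ⇑a ∧ a x₀ = 0}
  set e := ContinuousMap.isometryEquivBoundedOfCompact X ℝ
  rw [← totallyBounded_image_iff
    (ContinuousMap.isometryEquivBoundedOfCompact X ℝ).isometry.isUniformInducing]
  set D := Metric.diam (Set.univ : Set X)
  have hcomp : IsCompact (closure (e '' S)) := by
    refine BoundedContinuousFunction.arzela_ascoli (Metric.closedBall (0:ℝ) D)
      (isCompact_closedBall 0 D) (e '' S) ?_ ?_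
    · rintro f x ⟨a, ⟨ha1, ha2⟩, rfl⟩
      have : dist (a x) (a x₀) ≤ 1 * dist x x₀ := ha1.dist_le_mul x x₀
      have hd : dist x x₀ ≤ D :=
        Metric.dist_le_diam_of_mem isCompact_univ.isBounded trivial trivial
      have : dist (a x) 0 ≤ D := by rw [← ha2]; linarith
      exact Metric.mem_closedBall.mpr this
    · refine Metric.equicontinuous_of_continuity_modulus id (by simpa using
        Filter.tendsto_id) _ ?_
      rintro x y ⟨f, hf⟩
      obtain ⟨a, ⟨ha1, _⟩, rfl⟩ := hf
      have h := ha1.dist_le_mul x y; simp only [NNReal.coe_one, one_mul] at h; exact h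
  exact (hcomp.totallyBounded).subset subset_closure

/-- The key estimate on a single real continuous function, from the Lipschitz control. -/
lemma key_real (φ ψ : C(X,ℂ) →⋆ₐ[ℂ] A) (a : C(X,ℝ)) {δ : ℝ} (hδ : 0 < δ) :
    ∃ η > (0:ℝ), ∀ u ∈ unitary A,
      (∀ (f : X → ℝ) (hf : LipschitzWith 1 f),
        ‖φ (lipToC f hf) - u * ψ (lipToC f hf) * star u‖ ≤ η) →
      ‖φ (myToC a) - u * ψ (myToC a) * star u‖ < δ := by
  obtain ⟨g, K, hK, hga⟩ := exists_lip_near a (show (0:ℝ) < δ/3 by linarith)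
  set L : ℝ := max (K:ℝ) 1 with hLdef
  have hL : 0 < L := lt_of_lt_of_le one_pos (le_max_right _ _)
  have hKL : (K:ℝ) ≤ L := le_max_left _ _
  refine ⟨δ / (3 * L), by positivity, fun u hu hub => ?_⟩
  set f : X → ℝ := fun x => L⁻¹ * g x with hfdef
  have hf : LipschitzWith 1 f := by
    refine LipschitzWith.of_dist_le_mul fun x y => ?_
    have h2 := hK.dist_le_mul x y
    have hd0 : (0:ℝ) ≤ dist x y := dist_nonneg
    simp only [hfdef, Real.dist_eq, ← mul_sub, abs_mul, abs_inv, abs_of_pos hL] at *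
    rw [inv_mul_le_iff₀ hL]
    push_cast
    nlinarith [mul_le_mul_of_nonneg_right hKL hd0]
  have hgf : myToC g = (L:ℂ) • lipToC f hf := by
    ext x
    simp only [myToC, lipToC, ContinuousMap.coe_mk, ContinuousMap.smul_apply, smul_eq_mul,
      hfdef]
    push_cast
    rw [← mul_assoc, mul_inv_cancel₀ (by exact_mod_cast hL.ne' : (L:ℂ) ≠ 0), one_mul]
  have expand : φ (myToC a) - u * ψ (myToC a) * star u
      = (φ (myToC a) - φ (myToC g))
        + (L:ℂ) • (φ (lipToC f hf) - u * ψ (lipToC f hf) * star u)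
        + (u * ψ (myToC g) * star u - u * ψ (myToC a) * star u) := by
    rw [hgf, map_smul, map_smul]
    simp only [smul_sub, mul_smul_comm, smul_mul_assoc]
    abel
  rw [expand]
  have t1 : ‖φ (myToC a) - φ (myToC g)‖ < δ/3 := by
    rw [← map_sub, ← myToC_sub]
    refine lt_of_le_of_lt ((myNormApplyLe φ _).trans (norm_myToC_le _)) ?_
    rwa [norm_sub_rev]
  have t2 : ‖(L:ℂ) • (φ (lipToC f hf) - u * ψ (lipToC f hf) * star u)‖ ≤ δ/3 := by
    rw [norm_smul]
    have : ‖(L:ℂ)‖ = L := by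
      rw [Complex.norm_real, Real.norm_eq_abs, abs_of_pos hL]
    rw [this]
    calc L * ‖φ (lipToC f hf) - u * ψ (lipToC f hf) * star u‖
        ≤ L * (δ / (3 * L)) := by
          exact mul_le_mul_of_nonneg_left (hub f hf) hL.le
      _ = δ/3 := by field_simp
  have t3 : ‖u * ψ (myToC g) * star u - u * ψ (myToC a) * star u‖ < δ/3 := by
    have : u * ψ (myToC g) * star u - u * ψ (myToC a) * star u
        = u * (ψ (myToC g) - ψ (myToC a)) * star u := by
      simp only [mul_sub, sub_mul]
    rw [this, myConjNorm hu, ← map_sub, ← myToC_sub]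
    exact lt_of_le_of_lt ((myNormApplyLe ψ _).trans (norm_myToC_le _)) hga
  calc ‖_ + _ + _‖ ≤ _ := norm_add₃_le
    _ < δ := by linarith

end Aux

/-- For unital *-homomorphisms `φ, ψ : C(X) → A`, the unitary distance computed over
`1`-Lipschitz functions vanishes if and only if `φ` and `ψ` are approximately
unitarily equivalent. -/
theorem unitary_distance_zero_iff_approx_unitarily_equivalent
    (X : Type*) [MetricSpace X] [CompactSpace X] [Nonempty X]
    (A : Type*) [NormedRing A] [StarRing A] [CStarRing A] [CompleteSpace A]
    [NormedAlgebra ℂ A] [StarModule ℂ A]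
    (φ ψ : C(X, ℂ) →⋆ₐ[ℂ] A) :
    (∀ ε > (0 : ℝ), ∃ u ∈ unitary A,
        ∀ (f : X → ℝ) (hf : LipschitzWith 1 f),
          ‖φ (lipToC f hf) - u * ψ (lipToC f hf) * star u‖ ≤ ε) ↔
      (∀ ε > (0 : ℝ), ∀ F : Finset C(X, ℂ), ∃ u ∈ unitary A,
        ∀ g ∈ F, ‖φ g - u * ψ g * star u‖ < ε) := by
  constructor
  · -- (i) → (ii)
    intro h1 ε hε F
    have H : ∀ g ∈ F, ∃ η > (0:ℝ), ∀ u ∈ unitary A,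
        (∀ (f : X → ℝ) (hf : LipschitzWith 1 f),
          ‖φ (lipToC f hf) - u * ψ (lipToC f hf) * star u‖ ≤ η) →
        ‖φ g - u * ψ g * star u‖ < ε := by
      intro g _
      set aRe : C(X, ℝ) := ⟨fun x => (g x).re, Complex.continuous_re.comp g.continuous⟩
      set aIm : C(X, ℝ) := ⟨fun x => (g x).im, Complex.continuous_im.comp g.continuous⟩
      have hdec : g = myToC aRe + Complex.I • myToC aIm := by
        ext x
        simp [myToC, aRe, aIm, Complex.ext_iff]
      obtain ⟨η₁, hη₁, H₁⟩ := key_real φ ψ aRe (show (0:ℝ) < ε/2 by linarith)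
      obtain ⟨η₂, hη₂, H₂⟩ := key_real φ ψ aIm (show (0:ℝ) < ε/2 by linarith)
      refine ⟨min η₁ η₂, lt_min hη₁ hη₂, fun u hu hub => ?_⟩
      have hsplit : φ g - u * ψ g * star u
          = (φ (myToC aRe) - u * ψ (myToC aRe) * star u)
            + Complex.I • (φ (myToC aIm) - u * ψ (myToC aIm) * star u) := by
        rw [hdec]
        simp only [map_add, map_smul, mul_add, add_mul, mul_smul_comm, smul_mul_assoc,
          smul_sub]
        abel
      have b1 := H₁ u hu fun f hf => (hub f hf).trans (min_le_left _ _)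
      have b2 := H₂ u hu fun f hf => (hub f hf).trans (min_le_right _ _)
      calc ‖φ g - u * ψ g * star u‖
          ≤ ‖φ (myToC aRe) - u * ψ (myToC aRe) * star u‖
            + ‖Complex.I • (φ (myToC aIm) - u * ψ (myToC aIm) * star u)‖ := by
            rw [hsplit]; exact norm_add_le _ _
        _ < ε := by
            rw [norm_smul, Complex.norm_I, one_mul]
            linarith
    rcases F.eq_empty_or_nonempty with rfl | hne
    · exact ⟨1, one_mem _, by simp⟩
    · choose! η hηpos hη using H
      obtain ⟨u, hu, hub⟩ := h1 (F.inf' hne η)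
        (by simp only [gt_iff_lt, Finset.lt_inf'_iff]; exact hηpos)
      exact ⟨u, hu, fun g hg => hη g hg u hu fun f hf =>
        (hub f hf).trans (Finset.inf'_le η hg)⟩
  · -- (ii) → (i)
    intro h2 ε hε
    letI := Classical.decEq C(X, ℂ)
    obtain ⟨x₀⟩ := ‹Nonempty X›
    obtain ⟨t, htfin, hcov⟩ := (Metric.totallyBounded_iff).mp (totallyBounded_lip x₀)
      (ε/4) (by linarith)
    obtain ⟨u, hu, hub⟩ := h2 (ε/2) (by linarith)
      (htfin.toFinset.image (fun a => myToC a))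
    refine ⟨u, hu, fun f hf => ?_⟩
    set c : ℝ := f x₀ with hc
    set a₀ : C(X, ℝ) := ⟨fun x => f x - c, hf.continuous.sub continuous_const⟩ with ha₀
    have ha₀S : a₀ ∈ {a : C(X, ℝ) | LipschitzWith 1 ⇑a ∧ a x₀ = 0} := by
      constructor
      · refine LipschitzWith.of_dist_le_mul fun x y => ?_
        have := hf.dist_le_mul x y
        simpa [ha₀, Real.dist_eq] using this
      · simp [ha₀, hc]
    obtain ⟨g, hgt, hgball⟩ := Set.mem_iUnion₂.mp (hcov ha₀S)
    have hdist : ‖a₀ - g‖ < ε/4 := by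
      rw [← dist_eq_norm]
      exact Metric.mem_ball.mp hgball
    have hgF : myToC g ∈ htfin.toFinset.image (fun a => myToC a) :=
      Finset.mem_image.mpr ⟨g, htfin.mem_toFinset.mpr hgt, rfl⟩
    have hmid := hub _ hgF
    have hdec : lipToC f hf = myToC a₀ + (c:ℂ) • 1 := by
      ext x
      simp [lipToC, myToC, ha₀]
    have hred : φ (lipToC f hf) - u * ψ (lipToC f hf) * star u
        = φ (myToC a₀) - u * ψ (myToC a₀) * star u := by
      rw [hdec]
      simp only [map_add, map_smul, map_one, mul_add, add_mul, mul_smul_comm,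
        smul_mul_assoc, mul_one, (Unitary.mem_iff.mp hu).2]
      abel
    have hsplit : φ (myToC a₀) - u * ψ (myToC a₀) * star u
        = (φ (myToC a₀) - φ (myToC g))
          + (φ (myToC g) - u * ψ (myToC g) * star u)
          + (u * (ψ (myToC g) - ψ (myToC a₀)) * star u) := by
      simp only [mul_sub, sub_mul]
      abel
    have t1 : ‖φ (myToC a₀) - φ (myToC g)‖ < ε/4 := by
      rw [← map_sub, ← myToC_sub]
      exact lt_of_le_of_lt ((myNormApplyLe φ _).trans (norm_myToC_le _)) hdist
    have t3 : ‖u * (ψ (myToC g) - ψ (myToC a₀)) * star u‖ < ε/4 := by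
      rw [myConjNorm hu, ← map_sub, ← myToC_sub]
      refine lt_of_le_of_lt ((myNormApplyLe ψ _).trans (norm_myToC_le _)) ?_
      rwa [norm_sub_rev]
    rw [hred, hsplit]
    calc ‖_ + _ + _‖ ≤ _ := norm_add₃_le
      _ ≤ ε := by linarith
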